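/- Let R be a commutative ring, L a Lie algebra over R, n ≥ 1 a natural number, and Φ : (Fin n → L) → R an R-multilinear map which is an invariant tensor on L, i.e., for every x ∈ L and every v : Fin n → L, ∑_{p : Fin n} Φ (Function.update v p ⁅x, v p⁆) = 0. Let S be a commutative semigroup and f : S → R an arbitrary function. Equip Finsupp S L with the S-expanded bracket, and define Ψ : (Fin n → Finsupp S L) → R by Ψ g = ∑_{s} f (s 0 * s 1 * ⋯ * s (n-1)) * Φ (fun i => (g i) (s i)), the sum ranging over all tuples s : Fin n → S with s i in the support of g i for each i (a finite sum). Then Ψ is an invariant tensor for the S-expanded algebra: for every w ∈ Finsupp S L and every g : Fin n → Finsupp S L, ∑_{p : Fin n} Ψ (Function.update g p ⁅w, g p⁆) = 0. -/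

import Mathlib

/-- The ordered product `s 0 * s 1 * ⋯ * s n` of a tuple of `n+1` elements of
a semigroup (which need not have an identity). -/
def finSemigroupProd {S : Type*} [Mul S] {n : ℕ} (s : Fin (n + 1) → S) : S :=
  (List.ofFn fun i : Fin n => s i.succ).foldl (· * ·) (s 0)


lemma foldl_coe {S : Type*} [Semigroup S] :
    ∀ (l : List S) (a : S),
      ((l.foldl (· * ·) a : S) : WithOne S) = ↑a * (l.map ((↑·) : S → WithOne S)).prod := by
  intro l
  induction l with
  | nil => intro a; simp
  | cons b l ih => intro a; simp [ih, mul_assoc]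

lemma coe_finSemigroupProd {S : Type*} [CommSemigroup S] {n : ℕ} (s : Fin (n + 1) → S) :
    ((finSemigroupProd s : S) : WithOne S) = ∏ i, (s i : WithOne S) := by
  rw [finSemigroupProd, foldl_coe, List.map_ofFn, Fin.prod_univ_succ, List.prod_ofFn]
  rfl

lemma finSemigroupProd_update {S : Type*} [CommSemigroup S] {n : ℕ}
    (σ : Fin (n + 1) → S) (p : Fin (n + 1)) (t : S) :
    finSemigroupProd (Function.update σ p (t * σ p)) = t * finSemigroupProd σ := by
  have : ((finSemigroupProd (Function.update σ p (t * σ p)) : S) : WithOne S)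
      = ((t * finSemigroupProd σ : S) : WithOne S) := by
    rw [WithOne.coe_mul, coe_finSemigroupProd, coe_finSemigroupProd]
    have h1 : ∀ i, ((Function.update σ p (t * σ p) i : S) : WithOne S)
        = Function.update (fun i => ((σ i : S) : WithOne S)) p (↑t * ↑(σ p)) i := by
      intro i; by_cases h : i = p
      · subst h; simp
      · simp [Function.update_of_ne h]
    rw [Finset.prod_congr rfl (fun i _ => h1 i),
      Finset.prod_update_of_mem (Finset.mem_univ p), mul_assoc, ← Finset.erase_eq]
    congr 1
    exact Finset.mul_prod_erase Finset.univ (fun x => ((σ x : S) : WithOne S))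
      (Finset.mem_univ p)
  exact WithOne.coe_inj.mp this

/-- **Invariant tensors for S-expanded algebras** (Theorem 4 of the paper).
Let `Φ` be an `R`-multilinear invariant tensor of rank `n+1 ≥ 1` on a Lie
algebra `L`, let `B` be the S-expanded bracket on `S →₀ L`, let `f : S → R`
be arbitrary constants, and let
`Ψ g = ∑_{s, s i ∈ (g i).support} f (s 0 * ⋯ * s n) * Φ (fun i => g i (s i))`.
Then `Ψ` is an invariant tensor for the S-expanded algebra. -/
theorem sExpansion_invariant_tensor
    (R : Type*) [CommRing R] (L : Type*) [LieRing L] [LieAlgebra R L]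
    (S : Type*) [CommSemigroup S]
    (n : ℕ)
    (Φ : MultilinearMap R (fun _ : Fin (n + 1) => L) R)
    (hΦ : ∀ (x : L) (v : Fin (n + 1) → L),
      ∑ p : Fin (n + 1), Φ (Function.update v p ⁅x, v p⁆) = 0)
    (B : (S →₀ L) →ₗ[R] (S →₀ L) →ₗ[R] (S →₀ L))
    (hB : ∀ (s t : S) (x y : L),
      B (Finsupp.single s x) (Finsupp.single t y)
        = Finsupp.single (s * t) ⁅x, y⁆)
    (f : S → R)
    (Ψ : (Fin (n + 1) → (S →₀ L)) → R)
    (hΨ : ∀ g : Fin (n + 1) → (S →₀ L),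
      Ψ g = ∑ s ∈ Fintype.piFinset (fun i => (g i).support),
        f (finSemigroupProd s) * Φ (fun i => (g i) (s i))) :
    ∀ (w : S →₀ L) (g : Fin (n + 1) → (S →₀ L)),
      ∑ p : Fin (n + 1), Ψ (Function.update g p (B w (g p))) = 0 := by
  classical
  -- Ψ can be computed over any large-enough family of finsets
  have key : ∀ (g : Fin (n + 1) → (S →₀ L)) (T : Fin (n + 1) → Finset S),
      (∀ i, (g i).support ⊆ T i) →
      Ψ g = ∑ s ∈ Fintype.piFinset T,
        f (finSemigroupProd s) * Φ (fun i => (g i) (s i)) := by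
    intro g T hT
    rw [hΨ]
    refine Finset.sum_subset (Fintype.piFinset_subset _ _ fun i => hT i) ?_
    intro s hs hs'
    simp only [Fintype.mem_piFinset] at hs hs'
    push_neg at hs'
    obtain ⟨i, hi⟩ := hs'
    rw [Φ.map_coord_zero (m := fun i => (g i) (s i)) i
      (Finsupp.notMem_support_iff.mp hi), mul_zero]
  -- evaluation on singles
  have Ψsingle : ∀ (τ : Fin (n + 1) → S) (z : Fin (n + 1) → L),
      Ψ (fun i => Finsupp.single (τ i) (z i)) = f (finSemigroupProd τ) * Φ z := by
    intro τ z
    by_cases hz : ∀ i, z i ≠ 0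
    · rw [hΨ]
      have hsupp : ∀ i, (Finsupp.single (τ i) (z i)).support = {τ i} :=
        fun i => Finsupp.support_single_ne_zero _ (hz i)
      have hpi : (Fintype.piFinset fun i => (Finsupp.single (τ i) (z i)).support)
          = {τ} := by
        ext s
        simp [Fintype.mem_piFinset, hsupp, funext_iff]
      rw [hpi, Finset.sum_singleton]
      congr 1
      apply congrArg
      funext i
      simp
    · push_neg at hz
      obtain ⟨i, hi⟩ := hz
      rw [hΨ, Φ.map_coord_zero (m := z) i hi, mul_zero]
      apply Finset.sum_eq_zero
      intro s hs
      rw [Fintype.mem_piFinset] at hs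
      have := hs i
      rw [hi, Finsupp.single_zero, Finsupp.support_zero] at this
      exact absurd this (Finset.notMem_empty _)
  -- Ψ as a bundled multilinear map
  have update_eval : ∀ (g : Fin (n + 1) → (S →₀ L)) (p : Fin (n + 1)) (a : S →₀ L)
      (s : Fin (n + 1) → S),
      (fun i => (Function.update g p a i) (s i))
        = Function.update (fun i => (g i) (s i)) p (a (s p)) := by
    intro g p a s
    funext i
    by_cases h : i = p
    · subst h; simp
    · simp [Function.update_of_ne h]
  let Ψ' : MultilinearMap R (fun _ : Fin (n + 1) => (S →₀ L)) R :=
    { toFun := Ψ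
      map_update_add' := by
        intro inst g p a b
        have hi : inst = instDecidableEqFin (n + 1) := Subsingleton.elim _ _
        subst hi
        set T : Fin (n + 1) → Finset S := fun i =>
          (Function.update g p a i).support ∪ (Function.update g p b i).support with hT
        have h1 : ∀ i, (Function.update g p (a + b) i).support ⊆ T i := by
          intro i
          by_cases h : i = p
          · subst h
            simp only [Function.update_self, hT]
            exact Finsupp.support_add
          · simp [Function.update_of_ne h, hT]
        have h2 : ∀ i, (Function.update g p a i).support ⊆ T i :=
          fun i => Finset.subset_union_left
        have h3 : ∀ i, (Function.update g p b i).support ⊆ T i :=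
          fun i => Finset.subset_union_right
        rw [key _ T h1, key _ T h2, key _ T h3, ← Finset.sum_add_distrib]
        refine Finset.sum_congr rfl fun s _ => ?_
        rw [update_eval, update_eval, update_eval, Finsupp.add_apply,
          Φ.map_update_add, mul_add]
      map_update_smul' := by
        intro inst g p c a
        have hi : inst = instDecidableEqFin (n + 1) := Subsingleton.elim _ _
        subst hi
        set T : Fin (n + 1) → Finset S := fun i => (Function.update g p a i).support
          with hT
        have h1 : ∀ i, (Function.update g p (c • a) i).support ⊆ T i := by
          intro i
          by_cases h : i = p
          · subst h
            simp only [Function.update_self, hT]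
            exact Finsupp.support_smul
          · simp [Function.update_of_ne h, hT]
        rw [key _ T h1, key _ T (fun i => Finset.Subset.refl _), Finset.smul_sum]
        refine Finset.sum_congr rfl fun s _ => ?_
        rw [update_eval, update_eval, Finsupp.smul_apply, Φ.map_update_smul]
        simp only [smul_eq_mul]
        ring }
  have hΨ'ap : ∀ v, Ψ' v = Ψ v := fun _ => rfl
  have Mp_eq : ∀ (w : S →₀ L) (p : Fin (n + 1)) (g : Fin (n + 1) → (S →₀ L)),
      (Ψ'.compLinearMap fun i => if i = p then B w else LinearMap.id) g
        = Ψ (Function.update g p (B w (g p))) := by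
    intro w p g
    rw [MultilinearMap.compLinearMap_apply, ← hΨ'ap]
    congr 1
    funext i
    by_cases h : i = p
    · subst h; simp
    · simp [h, Function.update_of_ne h]
  intro w g
  induction w using Finsupp.induction with
  | zero =>
    refine Finset.sum_eq_zero fun p _ => ?_
    rw [map_zero, LinearMap.zero_apply, ← hΨ'ap]
    exact Ψ'.map_update_zero g p
  | single_add t x w ht hx ih =>
    have hsingle : ∑ p : Fin (n + 1),
        Ψ (Function.update g p (B (Finsupp.single t x) (g p))) = 0 := by
      have hsum : ∑ p : Fin (n + 1),
          Ψ (Function.update g p (B (Finsupp.single t x) (g p)))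
          = (∑ p : Fin (n + 1),
              Ψ'.compLinearMap fun i => if i = p then B (Finsupp.single t x)
                else LinearMap.id) g := by
        rw [MultilinearMap.sum_apply]
        exact Finset.sum_congr rfl fun p _ => (Mp_eq _ p g).symm
      rw [hsum]
      set M : MultilinearMap R (fun _ : Fin (n + 1) => (S →₀ L)) R :=
        ∑ p : Fin (n + 1), Ψ'.compLinearMap fun i =>
          if i = p then B (Finsupp.single t x) else LinearMap.id with hM
      -- value of M on tuples of singles
      have Msingle : ∀ (σ : Fin (n + 1) → S) (y : Fin (n + 1) → L),
          M (fun i => Finsupp.single (σ i) (y i)) = 0 := by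
        intro σ y
        rw [hM, MultilinearMap.sum_apply]
        have step : ∀ p : Fin (n + 1),
            (Ψ'.compLinearMap fun i => if i = p then B (Finsupp.single t x)
              else LinearMap.id) (fun i => Finsupp.single (σ i) (y i))
            = f (t * finSemigroupProd σ)
              * Φ (Function.update y p ⁅x, y p⁆) := by
          intro p
          rw [Mp_eq]
          have harg : Function.update (fun i => Finsupp.single (σ i) (y i)) p
              (B (Finsupp.single t x) (Finsupp.single (σ p) (y p)))
              = fun i => Finsupp.single (Function.update σ p (t * σ p) i)
                  (Function.update y p ⁅x, y p⁆ i) := by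
            funext i
            by_cases h : i = p
            · subst h; simp [hB]
            · simp [Function.update_of_ne h]
          rw [harg, Ψsingle, finSemigroupProd_update]
        rw [Finset.sum_congr rfl fun p _ => step p, ← Finset.mul_sum,
          hΦ x y, mul_zero]
      have hg : g = fun i => ∑ s ∈ (g i).support, Finsupp.single s ((g i) s) := by
        funext i
        exact (Finsupp.sum_single (g i)).symm
      calc M g = M (fun i => ∑ s ∈ (g i).support, Finsupp.single s ((g i) s)) := by
            rw [← hg]
        _ = ∑ s ∈ Fintype.piFinset (fun i => (g i).support),
              M (fun i => Finsupp.single (s i) ((g i) (s i))) :=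
            M.map_sum_finset _ _
        _ = 0 := Finset.sum_eq_zero fun s _ => Msingle _ _
    have hadd : ∀ p : Fin (n + 1),
        Ψ (Function.update g p (B (Finsupp.single t x + w) (g p)))
          = Ψ (Function.update g p (B (Finsupp.single t x) (g p)))
            + Ψ (Function.update g p (B w (g p))) := by
      intro p
      rw [map_add, LinearMap.add_apply, ← hΨ'ap, ← hΨ'ap, ← hΨ'ap]
      exact Ψ'.map_update_add g p _ _
    rw [Finset.sum_congr rfl fun p _ => hadd p, Finset.sum_add_distrib,
      hsingle, ih, add_zero]
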